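/- Fix for each bundle e ∈ E with |e| ≥ 2 an enumeration e = {i₁ᵉ,…,i_{k_e}ᵉ} of its elements, and define R_RMC ⊆ [0,1]^E as the set of all z for which there exist auxiliary values wᵉ_m (e ∈ E with |e| ≥ 2, 1 ≤ m ≤ k_e) with wᵉ_1 = z_{{i₁ᵉ}}, wᵉ_{k_e} = z_e, and max{0, wᵉ_{m−1} + z_{{i_mᵉ}} − 1} ≤ wᵉ_m ≤ min{wᵉ_{m−1}, z_{{i_mᵉ}}} for all 2 ≤ m ≤ k_e. Then R_RMC is an exact relaxation oracle for G: M_G ⊆ R_RMC, and every z ∈ R_RMC with z_{{i}} ∈ {0,1} for all i ∈ V satisfies z_e = ∏_{i∈e} z_{{i}} for all e ∈ E. Consequently the projection onto the (ρ,y)-coordinates of the perspective system with R = R_RMC and x ∈ {0,1}^V equals C_G. (Proposition 1, left-deep decomposition.) -/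

import Mathlib

open Finset

/-- A vector is binary if each coordinate is 0 or 1. -/
def IsBinaryVec {α : Type*} (x : α → ℝ) : Prop := ∀ i, x i = 0 ∨ x i = 1

variable {N : ℕ}

/-- The denominator `D(x) = 1 + Σ_{c∈E} v_c ∏_{i∈c} x_i`. -/
noncomputable def Dx (E : Finset (Finset (Fin N))) (v : Finset (Fin N) → ℝ)
    (x : Fin N → ℝ) : ℝ :=
  1 + ∑ c ∈ E, v c * ∏ i ∈ c, x i

/-- The choice probability set `C_G`. -/
def choiceSet (E : Finset (Finset (Fin N))) (v : Finset (Fin N) → ℝ) :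
    Set (ℝ × ({e // e ∈ E} → ℝ)) :=
  {p | ∃ x : Fin N → ℝ, IsBinaryVec x ∧ p.1 = 1 / Dx E v x ∧
      ∀ e : {e // e ∈ E}, p.2 e = (∏ i ∈ e.1, x i) / Dx E v x}

/-- The monomial set `M_G`. -/
def monoSet (E : Finset (Finset (Fin N))) : Set ({e // e ∈ E} → ℝ) :=
  {z | ∃ x : Fin N → ℝ, IsBinaryVec x ∧ ∀ e : {e // e ∈ E}, z e = ∏ i ∈ e.1, x i}

/-- An exact relaxation oracle: `R ⊆ [0,1]^E`, `M_G ⊆ R`, and every `z ∈ R` with binary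
singleton coordinates is the corresponding monomial vector. -/
def IsExactOracle (E : Finset (Finset (Fin N)))
    (hsing : ∀ i : Fin N, ({i} : Finset (Fin N)) ∈ E)
    (R : Set ({e // e ∈ E} → ℝ)) : Prop :=
  (∀ z ∈ R, ∀ e : {e // e ∈ E}, z e ∈ Set.Icc (0 : ℝ) 1) ∧
  monoSet E ⊆ R ∧
  (∀ z ∈ R, (∀ i : Fin N, z ⟨{i}, hsing i⟩ = 0 ∨ z ⟨{i}, hsing i⟩ = 1) →
    ∀ e : {e // e ∈ E}, z e = ∏ i ∈ e.1, z ⟨{i}, hsing i⟩)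

/-- `L_i(ρ,y)`. -/
noncomputable def Lb (E : Finset (Finset (Fin N)))
    (hsing : ∀ i : Fin N, ({i} : Finset (Fin N)) ∈ E)
    (v : Finset (Fin N) → ℝ) (ρ : ℝ) (y : {e // e ∈ E} → ℝ) (i : Fin N) : ℝ :=
  y ⟨{i}, hsing i⟩ +
    ∑ e ∈ E.attach, (if i ∈ e.1 then v e.1 * y e
      else v e.1 * max 0 (y ⟨{i}, hsing i⟩ + y e - ρ))

/-- `U_i(ρ,y)`. -/
noncomputable def Ub (E : Finset (Finset (Fin N)))
    (hsing : ∀ i : Fin N, ({i} : Finset (Fin N)) ∈ E)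
    (v : Finset (Fin N) → ℝ) (ρ : ℝ) (y : {e // e ∈ E} → ℝ) (i : Fin N) : ℝ :=
  y ⟨{i}, hsing i⟩ +
    ∑ e ∈ E.attach, (if i ∈ e.1 then v e.1 * y e
      else v e.1 * min (y ⟨{i}, hsing i⟩) (y e))

/-- The perspective system. -/
noncomputable def persSystem (E : Finset (Finset (Fin N)))
    (hsing : ∀ i : Fin N, ({i} : Finset (Fin N)) ∈ E)
    (v : Finset (Fin N) → ℝ) (R : Set ({e // e ∈ E} → ℝ)) :
    Set (ℝ × ({e // e ∈ E} → ℝ) × (Fin N → ℝ)) :=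
  {p | 0 ≤ p.1 ∧ (∃ z ∈ R, p.2.1 = p.1 • z) ∧
      p.1 + ∑ e ∈ E.attach, v e.1 * p.2.1 e = 1 ∧
      ∀ i : Fin N, Lb E hsing v p.1 p.2.1 i ≤ p.2.2 i ∧
        p.2.2 i ≤ Ub E hsing v p.1 p.2.1 i}

/-- The recursive McCormick relaxation `R_RMC` determined by a fixed enumeration
`ord e 0, ord e 1, …, ord e (|e|−1)` of each bundle `e`: `z ∈ [0,1]^E` such that for every
bundle with at least two elements there is a chain of auxiliary values `w` starting at the
first singleton coordinate, ending at `z_e`, and linked by McCormick envelopes. -/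
def rmcOracle (E : Finset (Finset (Fin N)))
    (hsing : ∀ i : Fin N, ({i} : Finset (Fin N)) ∈ E)
    (ord : Finset (Fin N) → ℕ → Fin N) : Set ({e // e ∈ E} → ℝ) :=
  {z | (∀ e : {e // e ∈ E}, z e ∈ Set.Icc (0 : ℝ) 1) ∧
    ∀ e : {e // e ∈ E}, 2 ≤ e.1.card →
      ∃ w : ℕ → ℝ,
        w 0 = z ⟨{ord e.1 0}, hsing _⟩ ∧
        w (e.1.card - 1) = z e ∧
        ∀ m, 1 ≤ m → m ≤ e.1.card - 1 →
          max 0 (w (m - 1) + z ⟨{ord e.1 m}, hsing _⟩ - 1) ≤ w m ∧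
          w m ≤ min (w (m - 1)) (z ⟨{ord e.1 m}, hsing _⟩)}

open Finset

lemma bin01_max (a b : ℝ) (ha : a = 0 ∨ a = 1) (hb : b = 0 ∨ b = 1) :
    max 0 (a + b - 1) = a * b := by
  rcases ha with h | h <;> rcases hb with h' | h' <;> subst h <;> subst h' <;> norm_num

lemma bin01_min (a b : ℝ) (ha : a = 0 ∨ a = 1) (hb : b = 0 ∨ b = 1) :
    min a b = a * b := by
  rcases ha with h | h <;> rcases hb with h' | h' <;> subst h <;> subst h' <;> norm_num

lemma prod_bin {α : Type*} {s : Finset α} {x : α → ℝ} (hx : ∀ i ∈ s, x i = 0 ∨ x i = 1) :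
    (∏ i ∈ s, x i) = 0 ∨ (∏ i ∈ s, x i) = 1 := by
  classical
  induction s using Finset.induction_on with
  | empty => simp
  | insert a s hns ih =>
    rw [Finset.prod_insert hns]
    rcases hx a (Finset.mem_insert_self a s) with h | h <;>
      rcases ih (fun i hi => hx i (Finset.mem_insert_of_mem hi)) with h' | h' <;>
      rw [h, h'] <;> norm_num

lemma chain_eq (k : ℕ) (w g : ℕ → ℝ) (hg : ∀ j, g j = 0 ∨ g j = 1)
    (h0 : w 0 = g 0)
    (hstep : ∀ m, 1 ≤ m → m ≤ k →
      max 0 (w (m - 1) + g m - 1) ≤ w m ∧ w m ≤ min (w (m - 1)) (g m)) :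
    ∀ m ≤ k, w m = ∏ j ∈ Finset.range (m + 1), g j := by
  intro m
  induction m with
  | zero => intro _; simpa using h0
  | succ n ih =>
    intro hle
    have hw : w n = ∏ j ∈ Finset.range (n + 1), g j := ih (Nat.le_of_succ_le hle)
    have hbin : w n = 0 ∨ w n = 1 := by rw [hw]; exact prod_bin (fun j _ => hg j)
    obtain ⟨h1, h2⟩ := hstep (n + 1) (Nat.le_add_left 1 n) hle
    simp only [Nat.add_sub_cancel] at h1 h2
    have heq : w (n + 1) = w n * g (n + 1) := by
      rw [bin01_max _ _ hbin (hg (n + 1))] at h1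
      rw [bin01_min _ _ hbin (hg (n + 1))] at h2
      exact le_antisymm h2 h1
    rw [Finset.prod_range_succ, ← hw, heq]

lemma prod_ord {N : ℕ} (e : Finset (Fin N)) (ord : ℕ → Fin N)
    (h : (Finset.range e.card).image ord = e) (f : Fin N → ℝ) :
    ∏ i ∈ e, f i = ∏ j ∈ Finset.range e.card, f (ord j) := by
  have hinj : Set.InjOn ord (Finset.range e.card) :=
    Finset.card_image_iff.mp (by rw [h, Finset.card_range])
  calc ∏ i ∈ e, f i = ∏ i ∈ (Finset.range e.card).image ord, f i := by rw [h]
    _ = ∏ j ∈ Finset.range e.card, f (ord j) :=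
        Finset.prod_image (fun a ha b hb hab => hinj ha hb hab)

lemma bin_max_div (a b D : ℝ) (hD : 0 < D) (ha : a = 0 ∨ a = 1) (hb : b = 0 ∨ b = 1) :
    max 0 (a / D + b / D - 1 / D) = a * b / D := by
  have h1 : a / D + b / D - 1 / D = (a + b - 1) / D := by ring
  have h2 : (0 : ℝ) = 0 / D := by simp
  rw [h1, h2, max_div_div_right hD.le, bin01_max a b ha hb]

lemma bin_min_div (a b D : ℝ) (hD : 0 < D) (ha : a = 0 ∨ a = 1) (hb : b = 0 ∨ b = 1) :
    min (a / D) (b / D) = a * b / D := by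
  rw [min_div_div_right hD.le, bin01_min a b ha hb]

example : True := trivial

lemma rmc_part1 {N : ℕ} (E : Finset (Finset (Fin N)))
    (hsing : ∀ i : Fin N, ({i} : Finset (Fin N)) ∈ E)
    (ord : Finset (Fin N) → ℕ → Fin N)
    (hord : ∀ e ∈ E, (Finset.range e.card).image (ord e) = e) :
    monoSet E ⊆ rmcOracle E hsing ord := by
  rintro z ⟨x, hx, hz⟩
  constructor
  · intro e
    rw [hz e]
    rcases prod_bin (fun i _ => hx i) with h | h <;> rw [h] <;>
      exact Set.mem_Icc.mpr (by norm_num)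
  · intro e hcard
    refine ⟨fun m => ∏ j ∈ Finset.range (m + 1), x (ord e.1 j), ?_, ?_, ?_⟩
    · beta_reduce
      rw [hz ⟨{ord e.1 0}, hsing _⟩, Finset.prod_singleton, Finset.prod_range_one]
    · beta_reduce
      have hk : e.1.card - 1 + 1 = e.1.card := by omega
      rw [hz e, prod_ord e.1 (ord e.1) (hord e.1 e.2) x, hk]
    · intro m hm hmk
      beta_reduce
      have hz' : z ⟨{ord e.1 m}, hsing _⟩ = x (ord e.1 m) := by
        rw [hz _, Finset.prod_singleton]
      have hm1 : m - 1 + 1 = m := Nat.succ_pred_eq_of_pos hm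
      have hsplit : (∏ j ∈ Finset.range (m + 1), x (ord e.1 j)) =
          (∏ j ∈ Finset.range (m - 1 + 1), x (ord e.1 j)) * x (ord e.1 m) := by
        rw [hm1, Finset.prod_range_succ]
      have hbin : (∏ j ∈ Finset.range (m - 1 + 1), x (ord e.1 j)) = 0 ∨
          (∏ j ∈ Finset.range (m - 1 + 1), x (ord e.1 j)) = 1 :=
        prod_bin (fun j _ => hx (ord e.1 j))
      rw [hz', hsplit]
      constructor
      · rw [bin01_max _ _ hbin (hx (ord e.1 m))]
      · rw [bin01_min _ _ hbin (hx (ord e.1 m))]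

lemma rmc_part2 {N : ℕ} (E : Finset (Finset (Fin N)))
    (hne : ∀ e ∈ E, e.Nonempty)
    (hsing : ∀ i : Fin N, ({i} : Finset (Fin N)) ∈ E)
    (ord : Finset (Fin N) → ℕ → Fin N)
    (hord : ∀ e ∈ E, (Finset.range e.card).image (ord e) = e) :
    ∀ z ∈ rmcOracle E hsing ord,
      (∀ i : Fin N, z ⟨{i}, hsing i⟩ = 0 ∨ z ⟨{i}, hsing i⟩ = 1) →
      ∀ e : {e // e ∈ E}, z e = ∏ i ∈ e.1, z ⟨{i}, hsing i⟩ := by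
  intro z hz hbin e
  have hc1 : 1 ≤ e.1.card := Finset.card_pos.mpr (hne e.1 e.2)
  rcases eq_or_lt_of_le hc1 with hc | hc
  · obtain ⟨i, hi⟩ := Finset.card_eq_one.mp hc.symm
    have he : e = ⟨{i}, hsing i⟩ := Subtype.ext hi
    rw [he, Finset.prod_singleton]
  · obtain ⟨w, hw0, hwk, hwstep⟩ := hz.2 e hc
    have hchain := chain_eq (e.1.card - 1) w (fun j => z ⟨{ord e.1 j}, hsing _⟩)
      (fun j => hbin _) hw0 hwstep (e.1.card - 1) le_rfl
    have hk : e.1.card - 1 + 1 = e.1.card := by omega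
    rw [hwk, hk] at hchain
    rw [hchain, prod_ord e.1 (ord e.1) (hord e.1 e.2) (fun i => z ⟨{i}, hsing i⟩)]

lemma rmc_part3 {N : ℕ} (E : Finset (Finset (Fin N)))
    (hne : ∀ e ∈ E, e.Nonempty)
    (hsing : ∀ i : Fin N, ({i} : Finset (Fin N)) ∈ E)
    (v : Finset (Fin N) → ℝ) (hv : ∀ e ∈ E, 0 < v e)
    (ord : Finset (Fin N) → ℕ → Fin N)
    (hord : ∀ e ∈ E, (Finset.range e.card).image (ord e) = e) :
    {p : ℝ × ({e // e ∈ E} → ℝ) |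
        ∃ x : Fin N → ℝ, IsBinaryVec x ∧
          (p.1, p.2, x) ∈ persSystem E hsing v (rmcOracle E hsing ord)}
      = choiceSet E v := by
  ext ⟨ρ, y⟩
  simp only [Set.mem_setOf_eq, persSystem, choiceSet]
  constructor
  · rintro ⟨x, hx, h0ρ, ⟨z, hzR, hy⟩, hsum, hLU⟩
    have hyz : ∀ e, y e = ρ * z e := by
      intro e; rw [hy]; simp
    have hz01 := hzR.1
    have hρ : 0 < ρ := by
      rcases eq_or_lt_of_le h0ρ with h | h
      · exfalso
        have hS : ∑ e ∈ E.attach, v e.1 * y e = 0 :=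
          Finset.sum_eq_zero fun e _ => by rw [hyz e, ← h]; ring
        rw [hS, ← h] at hsum
        norm_num at hsum
      · exact h
    have hynn : ∀ e, 0 ≤ y e := fun e =>
      by rw [hyz e]; exact mul_nonneg h0ρ (hz01 e).1
    have hzx : ∀ i, z ⟨{i}, hsing i⟩ = x i := by
      intro i
      rcases hx i with h0 | h1
      · have hL := (hLU i).1
        rw [h0] at hL
        simp only [Lb] at hL
        have hsumnn : 0 ≤ ∑ e ∈ E.attach, (if i ∈ e.1 then v e.1 * y e
            else v e.1 * max 0 (y ⟨{i}, hsing i⟩ + y e - ρ)) := by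
          apply Finset.sum_nonneg
          intro e _
          split_ifs
          · exact mul_nonneg (hv e.1 e.2).le (hynn e)
          · exact mul_nonneg (hv e.1 e.2).le (le_max_left 0 _)
        have hyi0 : y ⟨{i}, hsing i⟩ = 0 :=
          le_antisymm (by linarith) (hynn _)
        rw [hyz] at hyi0
        rw [h0]
        rcases mul_eq_zero.mp hyi0 with h | h
        · exact absurd h hρ.ne'
        · exact h
      · have hU := (hLU i).2
        rw [h1] at hU
        simp only [Ub] at hU
        have hle : ∑ e ∈ E.attach, (if i ∈ e.1 then v e.1 * y e
            else v e.1 * min (y ⟨{i}, hsing i⟩) (y e)) ≤ ∑ e ∈ E.attach, v e.1 * y e := by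
          apply Finset.sum_le_sum
          intro e _
          split_ifs
          · exact le_rfl
          · exact mul_le_mul_of_nonneg_left (min_le_right _ _) (hv e.1 e.2).le
        have h2 : ρ ≤ y ⟨{i}, hsing i⟩ := by linarith
        rw [hyz] at h2
        have h4 : 1 ≤ z ⟨{i}, hsing i⟩ :=
          le_of_mul_le_mul_left (by rw [mul_one]; exact h2) hρ
        rw [h1]
        exact le_antisymm (hz01 _).2 h4
    have hbinz : ∀ i, z ⟨{i}, hsing i⟩ = 0 ∨ z ⟨{i}, hsing i⟩ = 1 := by
      intro i; rw [hzx i]; exact hx i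
    have hze : ∀ e : {e // e ∈ E}, z e = ∏ i ∈ e.1, x i := by
      intro e
      rw [rmc_part2 E hne hsing ord hord z hzR hbinz e]
      exact Finset.prod_congr rfl fun i _ => hzx i
    have hDz : Dx E v x = 1 + ∑ e ∈ E.attach, v e.1 * z e := by
      unfold Dx
      congr 1
      rw [← Finset.sum_attach E (fun c => v c * ∏ i ∈ c, x i)]
      exact Finset.sum_congr rfl fun e _ => by rw [hze e]
    have hSz : ∑ e ∈ E.attach, v e.1 * y e = ρ * ∑ e ∈ E.attach, v e.1 * z e := by
      rw [Finset.mul_sum]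
      exact Finset.sum_congr rfl fun e _ => by rw [hyz e]; ring
    rw [hSz] at hsum
    have hsum' : ρ * Dx E v x = 1 := by
      rw [hDz]; linear_combination hsum
    have hDne : Dx E v x ≠ 0 := by
      intro h; rw [h, mul_zero] at hsum'; norm_num at hsum'
    refine ⟨x, hx, ?_, ?_⟩
    · rw [eq_div_iff hDne]; exact hsum'
    · intro e
      rw [hyz e, hze e, eq_div_iff hDne]
      linear_combination (∏ i ∈ e.1, x i) * hsum'
  · rintro ⟨x, hx, h1, h2⟩
    have hS0 : 0 ≤ ∑ c ∈ E, v c * ∏ i ∈ c, x i :=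
      Finset.sum_nonneg fun c hc => mul_nonneg (hv c hc).le
        (by rcases prod_bin (fun i _ => hx i) with h | h <;> rw [h] <;> norm_num)
    have hD0 : 0 < Dx E v x := by unfold Dx; linarith
    have hzmem : (fun e : {e // e ∈ E} => ∏ i ∈ e.1, x i) ∈ rmcOracle E hsing ord :=
      rmc_part1 E hsing ord hord ⟨x, hx, fun e => rfl⟩
    refine ⟨x, hx, ?_, ⟨_, hzmem, ?_⟩, ?_, ?_⟩
    · rw [h1]; positivity
    · funext e
      simp only [Pi.smul_apply, smul_eq_mul]
      rw [h2 e, h1]; ring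
    · have hSa : ∑ e ∈ E.attach, v e.1 * y e =
          (∑ c ∈ E, v c * ∏ i ∈ c, x i) / Dx E v x := by
        rw [← Finset.sum_attach E (fun c => v c * ∏ i ∈ c, x i), Finset.sum_div]
        exact Finset.sum_congr rfl fun e _ => by rw [h2 e]; ring
      rw [h1, hSa, ← add_div, div_eq_one_iff_eq hD0.ne']
      rfl
    · intro i
      have hyi : y ⟨{i}, hsing i⟩ = x i / Dx E v x := by
        rw [h2]; rw [Finset.prod_singleton]
      have hmulz : ∀ e : {e // e ∈ E}, i ∈ e.1 →
          x i * ∏ j ∈ e.1, x j = ∏ j ∈ e.1, x j := by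
        intro e hie
        rcases hx i with h | h
        · rw [h, zero_mul, Finset.prod_eq_zero hie h]
        · rw [h, one_mul]
      have hsum2 : ∑ e ∈ E.attach, v e.1 * (x i * (∏ j ∈ e.1, x j) / Dx E v x) =
          x i * ((∑ c ∈ E, v c * ∏ j ∈ c, x j) / Dx E v x) := by
        rw [Finset.sum_attach E (fun c => v c * (x i * (∏ j ∈ c, x j) / Dx E v x)),
          Finset.sum_div, Finset.mul_sum]
        exact Finset.sum_congr rfl fun c _ => by ring
      have hfin : x i / Dx E v x +
          x i * ((∑ c ∈ E, v c * ∏ j ∈ c, x j) / Dx E v x) = x i := by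
        have hDx : Dx E v x = 1 + ∑ c ∈ E, v c * ∏ j ∈ c, x j := rfl
        have h5 : x i / Dx E v x + x i * ((∑ c ∈ E, v c * ∏ j ∈ c, x j) / Dx E v x)
            = x i * Dx E v x / Dx E v x := by rw [hDx]; ring
        rw [h5, mul_div_assoc, div_self hD0.ne', mul_one]
      constructor
      · have hLb : Lb E hsing v ρ y i = x i := by
          simp only [Lb]
          have hterm : ∀ e ∈ E.attach, (if i ∈ e.1 then v e.1 * y e
              else v e.1 * max 0 (y ⟨{i}, hsing i⟩ + y e - ρ)) =
              v e.1 * (x i * (∏ j ∈ e.1, x j) / Dx E v x) := by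
            intro e _
            have hbz : (∏ j ∈ e.1, x j) = 0 ∨ (∏ j ∈ e.1, x j) = 1 :=
              prod_bin (fun j _ => hx j)
            split_ifs with hie
            · rw [h2 e, hmulz e hie]
            · rw [h2 e, h1, hyi, bin_max_div (x i) (∏ j ∈ e.1, x j) (Dx E v x) hD0 (hx i) hbz]
          rw [Finset.sum_congr rfl hterm, hsum2, hyi, hfin]
        exact hLb.le
      · have hUb : Ub E hsing v ρ y i = x i := by
          simp only [Ub]
          have hterm : ∀ e ∈ E.attach, (if i ∈ e.1 then v e.1 * y e
              else v e.1 * min (y ⟨{i}, hsing i⟩) (y e)) =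
              v e.1 * (x i * (∏ j ∈ e.1, x j) / Dx E v x) := by
            intro e _
            have hbz : (∏ j ∈ e.1, x j) = 0 ∨ (∏ j ∈ e.1, x j) = 1 :=
              prod_bin (fun j _ => hx j)
            split_ifs with hie
            · rw [h2 e, hmulz e hie]
            · rw [h2 e, hyi, bin_min_div (x i) (∏ j ∈ e.1, x j) (Dx E v x) hD0 (hx i) hbz]
          rw [Finset.sum_congr rfl hterm, hsum2, hyi, hfin]
        exact hUb.ge

/-- **Proposition 1 (left-deep decomposition).** Given, for each bundle `e`, an enumeration
of its elements (`ord e` maps `{0,…,|e|−1}` onto `e`), the recursive McCormick relaxation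
`R_RMC` is an exact relaxation oracle for `G`: it contains `M_G`, and every `z ∈ R_RMC` with
binary singleton coordinates satisfies `z_e = ∏_{i∈e} z_{{i}}` for all `e ∈ E`.
Consequently, the projection onto the `(ρ,y)`-coordinates of the perspective system with
`R = R_RMC` and binary `x` equals `C_G`. -/
theorem rmc_oracle_exact_and_perspective_is_MIP
    (N : ℕ) (hN : 1 ≤ N)
    (E : Finset (Finset (Fin N)))
    (hne : ∀ e ∈ E, e.Nonempty)
    (hsing : ∀ i : Fin N, ({i} : Finset (Fin N)) ∈ E)
    (v : Finset (Fin N) → ℝ) (hv : ∀ e ∈ E, 0 < v e)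
    (ord : Finset (Fin N) → ℕ → Fin N)
    (hord : ∀ e ∈ E, (Finset.range e.card).image (ord e) = e) :
    monoSet E ⊆ rmcOracle E hsing ord ∧
    (∀ z ∈ rmcOracle E hsing ord,
      (∀ i : Fin N, z ⟨{i}, hsing i⟩ = 0 ∨ z ⟨{i}, hsing i⟩ = 1) →
      ∀ e : {e // e ∈ E}, z e = ∏ i ∈ e.1, z ⟨{i}, hsing i⟩) ∧
    {p : ℝ × ({e // e ∈ E} → ℝ) |
        ∃ x : Fin N → ℝ, IsBinaryVec x ∧
          (p.1, p.2, x) ∈ persSystem E hsing v (rmcOracle E hsing ord)}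
      = choiceSet E v := by
  exact ⟨rmc_part1 E hsing ord hord, rmc_part2 E hne hsing ord hord,
    rmc_part3 E hne hsing v hv ord hord⟩
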